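/- With the generalized Pauli operators σ_{mn} on ℂ^d and the states |m⟩⊗|n̄⟩ as defined, the d² vectors {(σ_{mn}⊗σ_{mn})(|0⟩⊗|0̄⟩) : 0 ≤ m,n ≤ d−1} form an orthonormal set in ℂ^d⊗ℂ^d. Hence the d² generalized Pauli operators can be perfectly distinguished using two sequential applications. -/

import Mathlib

open Complex Matrix Kronecker

variable (d : ℕ)

/-- The primitive d-th root of unity ω = e^{2πi/d}. -/
noncomputable def omega : ℂ := Complex.exp (2 * Real.pi * Complex.I / d)

/-- Generalized Pauli operator σ_{mn} = Σ_k ω^{nk} |k+m⟩⟨k| (indices mod d). -/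
noncomputable def pauli (m n : Fin d) : Matrix (Fin d) (Fin d) ℂ :=
  fun j k => if j = k + m then omega d ^ ((n : ℕ) * (k : ℕ)) else 0

/-- Standard basis vector |m⟩. -/
def ket (m : Fin d) : Fin d → ℂ := fun j => if j = m then 1 else 0

/-- Fourier basis vector |l̄⟩ = (1/√d) Σ_k ω^{kl} |k⟩. -/
noncomputable def ketBar (l : Fin d) : Fin d → ℂ :=
  fun k => (1 / Real.sqrt d : ℂ) * omega d ^ ((k : ℕ) * (l : ℕ))

lemma omega_prim (hd : 0 < d) : IsPrimitiveRoot (omega d) d :=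
  Complex.isPrimitiveRoot_exp d hd.ne'

lemma omega_ne_zero : omega d ≠ 0 := Complex.exp_ne_zero _

lemma star_omega : star (omega d) = (omega d)⁻¹ := by
  show (starRingEnd ℂ) (omega d) = (omega d)⁻¹
  rw [omega, ← Complex.exp_conj, ← Complex.exp_neg]
  congr 1
  simp [map_div₀, Complex.conj_I, Complex.conj_ofNat]
  ring

lemma sum_omega (hd : 0 < d) (n n' : Fin d) :
    ∑ t : Fin d, ((omega d)⁻¹ ^ ((n : ℕ) * (t : ℕ)) * (omega d) ^ ((n' : ℕ) * (t : ℕ)))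
      = if n = n' then (d : ℂ) else 0 := by
  have hprim := omega_prim d hd
  have hω : omega d ≠ 0 := omega_ne_zero d
  have key : ∀ t : Fin d, (omega d)⁻¹ ^ ((n : ℕ) * (t : ℕ)) * (omega d) ^ ((n' : ℕ) * (t : ℕ))
      = ((omega d) ^ (((n' : ℤ) - (n : ℤ)))) ^ (t : ℕ) := by
    intro t
    rw [← zpow_natCast (omega d)⁻¹, ← zpow_natCast (omega d), _root_.inv_zpow, ← _root_.zpow_neg,
      ← zpow_add₀ hω, ← zpow_natCast ((omega d) ^ (((n' : ℤ) - (n : ℤ))) : ℂ), ← _root_.zpow_mul]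
    congr 1
    push_cast
    ring
  simp only [key]
  rcases eq_or_ne n n' with h | h
  · subst h
    simp
  · rw [if_neg h]
    set ζ : ℂ := (omega d) ^ (((n' : ℤ) - (n : ℤ))) with hζ
    have hζd : ζ ^ d = 1 := by
      rw [hζ, ← zpow_natCast, ← _root_.zpow_mul, mul_comm, _root_.zpow_mul, zpow_natCast,
        hprim.pow_eq_one, _root_.one_zpow]
    have hζ1 : ζ ≠ 1 := by
      intro h1
      have hdvd : (d : ℤ) ∣ ((n' : ℤ) - (n : ℤ)) := (hprim.zpow_eq_one_iff_dvd _).mp h1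
      have h2 : ((n' : ℤ) - (n : ℤ)).natAbs < ((d : ℤ)).natAbs := by
        have := n.isLt; have := n'.isLt; omega
      have h3 := Int.eq_zero_of_dvd_of_natAbs_lt_natAbs hdvd h2
      apply h
      have : (n : ℤ) = (n' : ℤ) := by omega
      exact Fin.ext (by exact_mod_cast this)
    rw [Fin.sum_univ_eq_sum_range (fun t => ζ ^ t) d, geom_sum_eq hζ1, hζd, sub_self, zero_div]

lemma mv_eq (hd : 0 < d) (m n : Fin d) (p : Fin d × Fin d) :
    ((pauli d m n ⊗ₖ pauli d m n) *ᵥ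
      (fun p : Fin d × Fin d => ket d (⟨0, hd⟩ : Fin d) p.1 * ketBar d (⟨0, hd⟩ : Fin d) p.2)) p =
    (if p.1 = m then 1 else 0) *
      ((1 / Real.sqrt d : ℂ) * omega d ^ ((n : ℕ) * ((p.2 - m : Fin d) : ℕ))) := by
  haveI : NeZero d := ⟨hd.ne'⟩
  simp only [mulVec, dotProduct, Fintype.sum_prod_type, kroneckerMap_apply, ket, ketBar]
  have h0 : ∀ q2 : Fin d, ((q2 : ℕ) * ((⟨0, hd⟩ : Fin d) : ℕ)) = 0 := by intro q2; simp
  simp only [h0, pow_zero, mul_one]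
  rw [Finset.sum_comm]
  have step1 : ∀ q2 : Fin d,
      (∑ q1 : Fin d, pauli d m n p.1 q1 * pauli d m n p.2 q2 *
        ((if q1 = (⟨0, hd⟩ : Fin d) then (1:ℂ) else 0) * (1 / Real.sqrt d : ℂ)))
      = pauli d m n p.1 ⟨0, hd⟩ * pauli d m n p.2 q2 * (1 / Real.sqrt d : ℂ) := by
    intro q2
    rw [Finset.sum_eq_single (⟨0, hd⟩ : Fin d)]
    · simp
    · intro b _ hb; simp at hb; simp [hb]
    · simp
  simp only [step1]
  have hA : pauli d m n p.1 ⟨0, hd⟩ = if p.1 = m then 1 else 0 := by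
    simp only [pauli]
    have : (⟨0, hd⟩ : Fin d) + m = m := by
      apply Fin.ext; simp [Fin.add_def, Nat.mod_eq_of_lt m.isLt]
    rw [this]
    simp
  rw [Finset.sum_eq_single (p.2 - m)]
  · have hB : pauli d m n p.2 (p.2 - m) = omega d ^ ((n : ℕ) * ((p.2 - m : Fin d) : ℕ)) := by
      simp [pauli]
    rw [hA, hB]; ring
  · intro b _ hb
    have : pauli d m n p.2 b = 0 := by
      simp only [pauli]
      rw [if_neg]
      intro hh
      exact hb (by rw [hh, add_sub_cancel_right])
    simp [this]
  · simp

lemma innerSumOmega (hd : 0 < d) (m n n' : Fin d) :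
    ∑ j2 : Fin d, star ((1 / Real.sqrt d : ℂ) * omega d ^ ((n : ℕ) * ((j2 - m : Fin d) : ℕ))) *
        ((1 / Real.sqrt d : ℂ) * omega d ^ ((n' : ℕ) * ((j2 - m : Fin d) : ℕ)))
      = if n = n' then 1 else 0 := by
  haveI : NeZero d := ⟨hd.ne'⟩
  have reindex := Fintype.sum_equiv (Equiv.subRight m)
    (fun j2 : Fin d => star ((1 / Real.sqrt d : ℂ) * omega d ^ ((n : ℕ) * ((j2 - m : Fin d) : ℕ))) *
        ((1 / Real.sqrt d : ℂ) * omega d ^ ((n' : ℕ) * ((j2 - m : Fin d) : ℕ))))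
    (fun t : Fin d => star ((1 / Real.sqrt d : ℂ) * omega d ^ ((n : ℕ) * (t : ℕ))) *
        ((1 / Real.sqrt d : ℂ) * omega d ^ ((n' : ℕ) * (t : ℕ))))
    (fun j2 => rfl)
  rw [reindex]
  have hpoint : ∀ t : Fin d,
      star ((1 / Real.sqrt d : ℂ) * omega d ^ ((n : ℕ) * (t : ℕ))) *
        ((1 / Real.sqrt d : ℂ) * omega d ^ ((n' : ℕ) * (t : ℕ)))
      = (1 / (d : ℂ)) * ((omega d)⁻¹ ^ ((n : ℕ) * (t : ℕ)) * (omega d) ^ ((n' : ℕ) * (t : ℕ))) := by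
    intro t
    have h1 : star ((1 / Real.sqrt d : ℂ)) = (1 / Real.sqrt d : ℂ) := by
      rw [star_div₀, star_one]
      congr 1
      exact Complex.conj_ofReal _
    have hcc : (1 / Real.sqrt d : ℂ) * (1 / Real.sqrt d : ℂ) = 1 / (d : ℂ) := by
      rw [div_mul_div_comm, one_mul, ← Complex.ofReal_mul,
        Real.mul_self_sqrt (Nat.cast_nonneg d)]
      norm_num
    rw [star_mul', h1, star_pow, star_omega, ← hcc]
    ring
  simp only [hpoint]
  rw [← Finset.mul_sum, sum_omega d hd n n']
  have hdc : (d : ℂ) ≠ 0 := Nat.cast_ne_zero.mpr hd.ne'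
  by_cases h : n = n' <;> simp [h, hdc]

theorem pauli_outputs_orthonormal (hd : 0 < d) (m n m' n' : Fin d) :
    star ((pauli d m n ⊗ₖ pauli d m n) *ᵥ
        (fun p : Fin d × Fin d => ket d (⟨0, hd⟩ : Fin d) p.1 * ketBar d (⟨0, hd⟩ : Fin d) p.2)) ⬝ᵥ
      ((pauli d m' n' ⊗ₖ pauli d m' n') *ᵥ
        (fun p : Fin d × Fin d => ket d (⟨0, hd⟩ : Fin d) p.1 * ketBar d (⟨0, hd⟩ : Fin d) p.2))
      = if m = m' ∧ n = n' then 1 else 0 := by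
  haveI : NeZero d := ⟨hd.ne'⟩
  simp only [dotProduct, Pi.star_apply, Fintype.sum_prod_type]
  simp only [mv_eq d hd]
  rcases eq_or_ne m m' with hm | hm
  · subst hm
    have : (if m = m ∧ n = n' then (1:ℂ) else 0) = if n = n' then 1 else 0 := by
      simp
    rw [this, Finset.sum_eq_single m]
    · simp only [eq_self_iff_true, if_true, one_mul]
      exact innerSumOmega d hd m n n'
    · intro b _ hb
      apply Finset.sum_eq_zero
      intro j2 _
      simp [hb]
    · simp
  · rw [if_neg (by tauto)]
    apply Finset.sum_eq_zero
    intro j1 _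
    apply Finset.sum_eq_zero
    intro j2 _
    by_cases h1 : j1 = m
    · have : j1 ≠ m' := by rw [h1]; exact hm
      simp [this]
    · simp [h1]
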